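/- Consider the problem inf_{x ∈ ℝ^n} { f(x) : g₁(x) ≤ 0 } with f(x) = ½ xᵀQ₀x + a₀ᵀx + b₀ and g₁(x) = ½ xᵀQ₁x + a₁ᵀx + b₁, where Q₀ and Q₁ are symmetric positive definite n×n real matrices. Assume there exists x₀ with g₁(x₀) < 0 and that a₀ ≠ Q₀Q₁⁻¹a₁. Let ℒ be any lower bound on the optimal value of this problem and set μ̄ = (ℒ − f(x₀))/g₁(x₀) ≥ 0. Let θ(μ) = inf_{x ∈ ℝ^n} { f(x) + μ g₁(x) } be the dual function. Then (i) every optimal solution of the dual problem max_{μ ≥ 0} θ(μ) lies in the interval [0, μ̄], and (ii) θ is strongly concave on [0, μ̄] with constant of strong concavity α_D = (Q₁^{−1/2}(a₀ − Q₀Q₁⁻¹a₁))ᵀ (Q₁^{−1/2} Q₀ Q₁^{−1/2} + μ̄ I_n)⁻³ Q₁^{−1/2}(a₀ − Q₀Q₁⁻¹a₁), and α_D > 0. -/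

import Mathlib

open scoped Matrix
noncomputable section

/-- The square root of a positive semidefinite matrix, as defined in the older Mathlib
(`Matrix.PosSemidef.sqrt`, since removed in favour of `CFC.sqrt`). -/
def Matrix.PosSemidef.sqrt {n : Type*} [Fintype n] [DecidableEq n] {𝕜 : Type*} [RCLike 𝕜]
    [PartialOrder 𝕜]
    {A : Matrix n n 𝕜} (hA : A.PosSemidef) : Matrix n n 𝕜 :=
  hA.1.eigenvectorUnitary.1 * Matrix.diagonal ((↑) ∘ (√·) ∘ hA.1.eigenvalues) *
    (star hA.1.eigenvectorUnitary : Matrix n n 𝕜)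

/-- The quadratic function `x ↦ ½ xᵀQx + aᵀx + b`. -/
def quadF {n : ℕ} (Q : Matrix (Fin n) (Fin n) ℝ) (a : Fin n → ℝ) (b : ℝ)
    (x : Fin n → ℝ) : ℝ :=
  1/2 * (x ⬝ᵥ Q.mulVec x) + a ⬝ᵥ x + b

/-- Strong concavity with constant `α` of a (possibly extended-real-valued) function of a real
variable on a set `C ⊆ ℝ`, at points where the function is finite:
`θ(t μ₁ + (1−t) μ₂) ≥ t θ(μ₁) + (1−t) θ(μ₂) + (α t (1−t)/2)(μ₁−μ₂)²`. -/
def StrongConcaveOnR (C : Set ℝ) (α : ℝ) (θ : ℝ → EReal) : Prop :=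
  ∀ ⦃u⦄, u ∈ C → θ u ≠ ⊤ → θ u ≠ ⊥ → ∀ ⦃v⦄, v ∈ C → θ v ≠ ⊤ → θ v ≠ ⊥ →
    ∀ t ∈ Set.Icc (0:ℝ) 1,
      ((t * (θ u).toReal + (1 - t) * (θ v).toReal
          + α * t * (1 - t) / 2 * (u - v) ^ 2 : ℝ) : EReal) ≤ θ (t * u + (1 - t) * v)

/-- Dual function `θ(μ) = inf_x { f(x) + μ g₁(x) }` of a quadratic problem with one quadratic
constraint. -/
def dualQ {n : ℕ} (Q₀ Q₁ : Matrix (Fin n) (Fin n) ℝ) (a₀ a₁ : Fin n → ℝ) (b₀ b₁ : ℝ)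
    (μ : ℝ) : EReal :=
  ⨅ x : Fin n → ℝ, ((quadF Q₀ a₀ b₀ x + μ * quadF Q₁ a₁ b₁ x : ℝ) : EReal)

theorem Matrix.PosSemidef.posSemidef_sqrt {n : Type*} [Fintype n] [DecidableEq n]
    {A : Matrix n n ℝ} (hA : A.PosSemidef) : hA.sqrt.PosSemidef := by
  unfold Matrix.PosSemidef.sqrt
  rw [Matrix.star_eq_conjTranspose]
  exact (Matrix.PosSemidef.diagonal (fun i => by simp [Real.sqrt_nonneg])).mul_mul_conjTranspose_same _

theorem Matrix.PosSemidef.sqrt_mul_self {n : Type*} [Fintype n] [DecidableEq n]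
    {A : Matrix n n ℝ} (hA : A.PosSemidef) : hA.sqrt * hA.sqrt = A := by
  have hU' : star (hA.1.eigenvectorUnitary : Matrix n n ℝ) * (hA.1.eigenvectorUnitary : Matrix n n ℝ) = 1 :=
    Matrix.mem_unitaryGroup_iff'.mp hA.1.eigenvectorUnitary.2
  have hspec := hA.1.spectral_theorem
  rw [Unitary.conjStarAlgAut_apply] at hspec
  unfold Matrix.PosSemidef.sqrt
  simp only [mul_assoc]
  rw [← mul_assoc (star _) _, hU', one_mul, ← mul_assoc (Matrix.diagonal _),
    Matrix.diagonal_mul_diagonal]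
  conv_rhs => rw [hspec]
  rw [mul_assoc]
  congr 3
  funext i
  simp [Real.mul_self_sqrt (hA.eigenvalues_nonneg i)]

namespace QCQPaux

variable {n : ℕ}

lemma dot_mulVec_symm {M : Matrix (Fin n) (Fin n) ℝ} (hM : M.IsHermitian) (x z : Fin n → ℝ) :
    x ⬝ᵥ M.mulVec z = (M.mulVec x) ⬝ᵥ z := by
  rw [Matrix.dotProduct_mulVec, ← Matrix.mulVec_transpose]
  congr 2

lemma dot_symm {M : Matrix (Fin n) (Fin n) ℝ} (hM : M.IsHermitian) (a b : Fin n → ℝ) :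
    a ⬝ᵥ M.mulVec b = b ⬝ᵥ M.mulVec a := by
  rw [dot_mulVec_symm hM, dotProduct_comm]

lemma quad_decomp {M : Matrix (Fin n) (Fin n) ℝ} (hM : M.PosDef) (c : Fin n → ℝ) (β : ℝ)
    (x : Fin n → ℝ) :
    quadF M c β x = 1/2 * ((x + M⁻¹.mulVec c) ⬝ᵥ M.mulVec (x + M⁻¹.mulVec c))
      + (β - 1/2 * (c ⬝ᵥ M⁻¹.mulVec c)) := by
  have hMc : M.mulVec (M⁻¹.mulVec c) = c := by
    rw [Matrix.mulVec_mulVec, Matrix.mul_nonsing_inv _ hM.det_pos.ne'.isUnit,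
      Matrix.one_mulVec]
  have h1 : (M⁻¹.mulVec c) ⬝ᵥ M.mulVec x = c ⬝ᵥ x := by
    rw [dot_symm hM.isHermitian, hMc, dotProduct_comm]
  have h2 : x ⬝ᵥ M.mulVec (M⁻¹.mulVec c) = c ⬝ᵥ x := by
    rw [hMc, dotProduct_comm]
  have h3 : (M⁻¹.mulVec c) ⬝ᵥ M.mulVec (M⁻¹.mulVec c) = c ⬝ᵥ M⁻¹.mulVec c := by
    rw [hMc, dotProduct_comm]
  rw [quadF]
  rw [Matrix.mulVec_add, dotProduct_add, add_dotProduct, add_dotProduct,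
    h1, h2, h3]
  ring

lemma quad_lower {M : Matrix (Fin n) (Fin n) ℝ} (hM : M.PosDef) (c : Fin n → ℝ) (β : ℝ)
    (x : Fin n → ℝ) :
    β - 1/2 * (c ⬝ᵥ M⁻¹.mulVec c) ≤ quadF M c β x := by
  rw [quad_decomp hM c β x]
  have := hM.posSemidef.dotProduct_mulVec_nonneg (x + M⁻¹.mulVec c)
  simp only [star_trivial] at this
  nlinarith

lemma quad_min {M : Matrix (Fin n) (Fin n) ℝ} (hM : M.PosDef) (c : Fin n → ℝ) (β : ℝ) :
    quadF M c β (-(M⁻¹.mulVec c)) = β - 1/2 * (c ⬝ᵥ M⁻¹.mulVec c) := by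
  rw [quad_decomp hM c β]
  simp

lemma iInf_coe_eq {ι : Type*} [Nonempty ι] {F : ι → ℝ} {m : ℝ}
    (h1 : ∀ x, m ≤ F x) (h2 : ∃ x, F x = m) :
    (⨅ x : ι, ((F x : ℝ) : EReal)) = (m : EReal) := by
  apply le_antisymm
  · obtain ⟨x, hx⟩ := h2
    exact (iInf_le _ x).trans_eq (by rw [hx])
  · exact le_iInf fun x => EReal.coe_le_coe_iff.2 (h1 x)

lemma quad_combine (Q₀ Q₁ : Matrix (Fin n) (Fin n) ℝ) (a₀ a₁ : Fin n → ℝ) (b₀ b₁ : ℝ)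
    (μ : ℝ) (x : Fin n → ℝ) :
    quadF Q₀ a₀ b₀ x + μ * quadF Q₁ a₁ b₁ x
      = quadF (Q₀ + μ • Q₁) (a₀ + μ • a₁) (b₀ + μ * b₁) x := by
  simp only [quadF, Matrix.add_mulVec, Matrix.smul_mulVec, dotProduct_add,
    add_dotProduct, dotProduct_smul, smul_dotProduct, smul_eq_mul]
  ring

lemma comb_posDef {Q₀ Q₁ : Matrix (Fin n) (Fin n) ℝ} (hQ₀ : Q₀.PosDef) (hQ₁ : Q₁.PosDef)
    {μ : ℝ} (hμ : 0 ≤ μ) : (Q₀ + μ • Q₁).PosDef := by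
  have hsm : (μ • Q₁).IsHermitian := by
    rw [Matrix.IsHermitian, Matrix.conjTranspose_smul, star_trivial, hQ₁.isHermitian.eq]
  refine Matrix.PosDef.of_dotProduct_mulVec_pos (hQ₀.isHermitian.add hsm) fun x hx => ?_
  have h0 := hQ₀.dotProduct_mulVec_pos hx
  have h1 := hQ₁.dotProduct_mulVec_pos hx
  simp only [star_trivial] at *
  rw [Matrix.add_mulVec, dotProduct_add, Matrix.smul_mulVec,
    dotProduct_smul]
  have : 0 ≤ μ • (x ⬝ᵥ Q₁.mulVec x) := smul_nonneg hμ h1.le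
  linarith

section spec
variable {U : Matrix (Fin n) (Fin n) ℝ} (hU : U * star U = 1) (hU' : star U * U = 1)

include hU hU'

set_option linter.unusedSectionVars false

lemma conj_diag_mul (r s : Fin n → ℝ) :
    (U * Matrix.diagonal r * star U) * (U * Matrix.diagonal s * star U)
      = U * Matrix.diagonal (fun i => r i * s i) * star U := by
  simp only [mul_assoc]
  rw [← mul_assoc (star U) U, hU', one_mul, ← mul_assoc (Matrix.diagonal r),
    Matrix.diagonal_mul_diagonal]

lemma conj_diag_inv {r : Fin n → ℝ} (hr : ∀ i, r i ≠ 0) :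
    (U * Matrix.diagonal r * star U)⁻¹ = U * Matrix.diagonal (fun i => (r i)⁻¹) * star U := by
  apply Matrix.inv_eq_right_inv
  rw [conj_diag_mul hU hU']
  have h : (fun i => r i * (r i)⁻¹) = fun _ => (1:ℝ) := by
    funext i; exact mul_inv_cancel₀ (hr i)
  rw [h, Matrix.diagonal_one, mul_one, hU]

lemma conj_diag_dot (r : Fin n → ℝ) (v : Fin n → ℝ) :
    v ⬝ᵥ (U * Matrix.diagonal r * star U).mulVec v
      = ∑ i, r i * ((star U).mulVec v i)^2 := by
  have h1 : (U * Matrix.diagonal r * star U).mulVec v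
      = U.mulVec ((Matrix.diagonal r).mulVec ((star U).mulVec v)) := by
    rw [Matrix.mulVec_mulVec, Matrix.mulVec_mulVec]
  rw [h1, Matrix.dotProduct_mulVec, ← Matrix.mulVec_transpose]
  have h2 : Uᵀ.mulVec v = (star U).mulVec v := by
    rw [Matrix.star_eq_conjTranspose, Matrix.conjTranspose_eq_transpose_of_trivial]
  rw [h2, dotProduct]
  apply Fintype.sum_congr
  intro i
  rw [Matrix.mulVec_diagonal]
  ring

lemma spectral_shift {A : Matrix (Fin n) (Fin n) ℝ} {lam : Fin n → ℝ}
    (hspec : A = U * Matrix.diagonal lam * star U) (t : ℝ) :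
    A + t • 1 = U * Matrix.diagonal (fun i => lam i + t) * star U := by
  have h1 : (t • 1 : Matrix (Fin n) (Fin n) ℝ) = U * (t • 1) * star U := by
    rw [Matrix.mul_smul, mul_one, Matrix.smul_mul, hU]
  rw [hspec, h1, ← Matrix.add_mul, ← Matrix.mul_add, Matrix.smul_one_eq_diagonal,
    ← Matrix.diagonal_add]

end spec

lemma scalar_key {lam u s t mubar c2 : ℝ} (hlam : 0 < lam) (hu : 0 ≤ u) (hub : u ≤ mubar)
    (hs : 0 ≤ s) (hsb : s ≤ mubar) (ht0 : 0 ≤ t) (ht1 : t ≤ 1) (hc2 : 0 ≤ c2) :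
    t * (1-t) * (u-s)^2 * (((lam+mubar)^3)⁻¹ * c2)
      ≤ t * ((lam+u)⁻¹ * c2) + (1-t) * ((lam+s)⁻¹ * c2)
        - (lam + (t*u+(1-t)*s))⁻¹ * c2 := by
  have ha : 0 < lam + u := by linarith
  have hb : 0 < lam + s := by linarith
  have hm : 0 < lam + (t*u+(1-t)*s) := by nlinarith
  have hL : 0 < lam + mubar := by linarith
  have hmle : lam + (t*u+(1-t)*s) ≤ lam + mubar := by nlinarith
  have key : t * (lam+u)⁻¹ + (1-t) * (lam+s)⁻¹ - (lam + (t*u+(1-t)*s))⁻¹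
      = t*(1-t)*(u-s)^2 / ((lam+u) * (lam+s) * (lam + (t*u+(1-t)*s))) := by
    field_simp
    ring
  have h1t : (0:ℝ) ≤ 1 - t := by linarith
  have hnum : 0 ≤ t*(1-t)*(u-s)^2 * c2 :=
    mul_nonneg (mul_nonneg (mul_nonneg ht0 h1t) (sq_nonneg _)) hc2
  have hden : (lam+u) * (lam+s) * (lam + (t*u+(1-t)*s)) ≤ (lam+mubar)^3 := by
    calc (lam+u) * (lam+s) * (lam + (t*u+(1-t)*s))
        ≤ (lam+mubar) * (lam+mubar) * (lam+mubar) := by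
          apply mul_le_mul (mul_le_mul (by linarith) (by linarith) hb.le hL.le) hmle hm.le
          positivity
      _ = (lam+mubar)^3 := by ring
  have hdenpos : 0 < (lam+u) * (lam+s) * (lam + (t*u+(1-t)*s)) := by positivity
  calc t * (1-t) * (u-s)^2 * (((lam+mubar)^3)⁻¹ * c2)
      = (t*(1-t)*(u-s)^2 * c2) * ((lam+mubar)^3)⁻¹ := by ring
    _ ≤ (t*(1-t)*(u-s)^2 * c2) * ((lam+u) * (lam+s) * (lam + (t*u+(1-t)*s)))⁻¹ := by
        apply mul_le_mul_of_nonneg_left _ hnum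
        exact inv_anti₀ hdenpos hden
    _ = (t * (lam+u)⁻¹ + (1-t) * (lam+s)⁻¹ - (lam + (t*u+(1-t)*s))⁻¹) * c2 := by
        rw [key, div_eq_mul_inv]; ring
    _ = _ := by ring

lemma posDef_sqrt {Q : Matrix (Fin n) (Fin n) ℝ} (hQ : Q.PosDef) :
    (hQ.posSemidef.sqrt).PosDef := by
  have hRps : (hQ.posSemidef.sqrt).PosSemidef := hQ.posSemidef.posSemidef_sqrt
  refine Matrix.PosDef.of_dotProduct_mulVec_pos hRps.1 fun x hx => ?_
  rcases lt_or_eq_of_le (hRps.dotProduct_mulVec_nonneg x) with h | h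
  · simpa using h
  · exfalso
    have hzero : hQ.posSemidef.sqrt.mulVec x = 0 := by
      rw [← hRps.dotProduct_mulVec_zero_iff x]
      exact h.symm
    have hQx : Q.mulVec x = 0 := by
      rw [← hQ.posSemidef.sqrt_mul_self, ← Matrix.mulVec_mulVec, hzero, Matrix.mulVec_zero]
    have := hQ.dotProduct_mulVec_pos hx
    rw [hQx] at this
    simp at this

lemma sandwich_posDef {Q S : Matrix (Fin n) (Fin n) ℝ} (hQ : Q.PosDef) (hS : S.PosDef) :
    (S * Q * S).PosDef := by
  have hherm : (S * Q * S).IsHermitian := by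
    rw [Matrix.IsHermitian, Matrix.conjTranspose_mul, Matrix.conjTranspose_mul,
      hQ.isHermitian.eq, hS.isHermitian.eq, mul_assoc]
  refine Matrix.PosDef.of_dotProduct_mulVec_pos hherm fun x hx => ?_
  have hSx : S.mulVec x ≠ 0 := by
    intro h
    have := hS.dotProduct_mulVec_pos hx
    rw [h] at this
    simp at this
  have h1 : (S * Q * S).mulVec x = S.mulVec (Q.mulVec (S.mulVec x)) := by
    rw [Matrix.mulVec_mulVec, Matrix.mulVec_mulVec]
  rw [star_trivial, h1, dot_mulVec_symm hS.isHermitian]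
  have := hQ.dotProduct_mulVec_pos hSx
  simpa using this

end QCQPaux

open QCQPaux

set_option maxHeartbeats 2000000

/-- For the problem `inf { f(x) : g₁(x) ≤ 0 }` with `f, g₁` quadratics having positive definite
matrices `Q₀, Q₁`, a strictly feasible point `x₀`, `a₀ ≠ Q₀Q₁⁻¹a₁`, and a lower bound `ℒ` on the
optimal value, setting `μ̄ = (ℒ − f(x₀))/g₁(x₀) ≥ 0`: every optimal dual solution lies in
`[0, μ̄]` and the dual function is strongly concave on `[0, μ̄]` with constant
`α_D = (Q₁^{−1/2}(a₀ − Q₀Q₁⁻¹a₁))ᵀ(Q₁^{−1/2}Q₀Q₁^{−1/2} + μ̄ I)⁻³ Q₁^{−1/2}(a₀ − Q₀Q₁⁻¹a₁) > 0`. -/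
theorem dual_strongly_concave_qcqp_one_constraint
    {n : ℕ} (Q₀ Q₁ : Matrix (Fin n) (Fin n) ℝ)
    (hQ₀ : Q₀.PosDef) (hQ₁ : Q₁.PosDef)
    (a₀ a₁ : Fin n → ℝ) (b₀ b₁ : ℝ)
    (x₀ : Fin n → ℝ) (hx₀ : quadF Q₁ a₁ b₁ x₀ < 0)
    (ha : a₀ ≠ (Q₀ * Q₁⁻¹).mulVec a₁)
    (ℒ : ℝ) (hℒ : ∀ x : Fin n → ℝ, quadF Q₁ a₁ b₁ x ≤ 0 → ℒ ≤ quadF Q₀ a₀ b₀ x) :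
    0 ≤ (ℒ - quadF Q₀ a₀ b₀ x₀) / quadF Q₁ a₁ b₁ x₀ ∧
    (∀ μ : ℝ, 0 ≤ μ →
      (∀ μ' : ℝ, 0 ≤ μ' → dualQ Q₀ Q₁ a₀ a₁ b₀ b₁ μ' ≤ dualQ Q₀ Q₁ a₀ a₁ b₀ b₁ μ) →
      μ ∈ Set.Icc 0 ((ℒ - quadF Q₀ a₀ b₀ x₀) / quadF Q₁ a₁ b₁ x₀)) ∧
    0 < ((hQ₁.posSemidef.sqrt)⁻¹.mulVec (a₀ - (Q₀ * Q₁⁻¹).mulVec a₁)) ⬝ᵥ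
        ((((hQ₁.posSemidef.sqrt)⁻¹ * Q₀ * (hQ₁.posSemidef.sqrt)⁻¹
            + ((ℒ - quadF Q₀ a₀ b₀ x₀) / quadF Q₁ a₁ b₁ x₀) • (1 : Matrix (Fin n) (Fin n) ℝ)) ^ 3)⁻¹.mulVec
          ((hQ₁.posSemidef.sqrt)⁻¹.mulVec (a₀ - (Q₀ * Q₁⁻¹).mulVec a₁))) ∧
    StrongConcaveOnR (Set.Icc 0 ((ℒ - quadF Q₀ a₀ b₀ x₀) / quadF Q₁ a₁ b₁ x₀))
      (((hQ₁.posSemidef.sqrt)⁻¹.mulVec (a₀ - (Q₀ * Q₁⁻¹).mulVec a₁)) ⬝ᵥ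
        ((((hQ₁.posSemidef.sqrt)⁻¹ * Q₀ * (hQ₁.posSemidef.sqrt)⁻¹
            + ((ℒ - quadF Q₀ a₀ b₀ x₀) / quadF Q₁ a₁ b₁ x₀) • (1 : Matrix (Fin n) (Fin n) ℝ)) ^ 3)⁻¹.mulVec
          ((hQ₁.posSemidef.sqrt)⁻¹.mulVec (a₀ - (Q₀ * Q₁⁻¹).mulVec a₁))))
      (dualQ Q₀ Q₁ a₀ a₁ b₀ b₁) := by
  classical
  have hLf : ℒ ≤ quadF Q₀ a₀ b₀ x₀ := hℒ x₀ hx₀.le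
  set μb := (ℒ - quadF Q₀ a₀ b₀ x₀) / quadF Q₁ a₁ b₁ x₀ with hμbdef
  have hμb0 : 0 ≤ μb := div_nonneg_of_nonpos (by linarith) hx₀.le
  -- matrices
  set R := hQ₁.posSemidef.sqrt with hRdef
  have hRpd : R.PosDef := posDef_sqrt hQ₁
  have hRR : R * R = Q₁ := hQ₁.posSemidef.sqrt_mul_self
  set S := R⁻¹ with hSdef
  have hSpd : S.PosDef := hRpd.inv
  have hRS : R * S = 1 := Matrix.mul_nonsing_inv _ hRpd.det_pos.ne'.isUnit
  have hSR : S * R = 1 := Matrix.nonsing_inv_mul _ hRpd.det_pos.ne'.isUnit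
  set d := a₀ - (Q₀ * Q₁⁻¹).mulVec a₁ with hddef
  have hdne : d ≠ 0 := sub_ne_zero_of_ne ha
  set A := S * Q₀ * S with hAdef
  have hApd : A.PosDef := sandwich_posDef hQ₀ hSpd
  set lam := hApd.isHermitian.eigenvalues with hlamdef
  have hlampos : ∀ i, 0 < lam i := fun i => hApd.eigenvalues_pos i
  set U := (Matrix.IsHermitian.eigenvectorUnitary hApd.isHermitian : Matrix (Fin n) (Fin n) ℝ)
    with hUdef
  have hUU : U * star U = 1 :=
    Matrix.mem_unitaryGroup_iff.mp (Matrix.IsHermitian.eigenvectorUnitary hApd.isHermitian).2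
  have hUU' : star U * U = 1 :=
    Matrix.mem_unitaryGroup_iff'.mp (Matrix.IsHermitian.eigenvectorUnitary hApd.isHermitian).2
  have hAspec : A = U * Matrix.diagonal lam * star U := by
    have h := hApd.isHermitian.spectral_theorem
    rwa [Unitary.conjStarAlgAut_apply, RCLike.ofReal_real_eq_id, Function.id_comp] at h
  set v := S.mulVec d with hvdef
  have hvne : v ≠ 0 := by
    intro h
    apply hdne
    have h2 : R.mulVec v = d := by
      rw [hvdef, Matrix.mulVec_mulVec, hRS, Matrix.one_mulVec]
    rw [h, Matrix.mulVec_zero] at h2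
    exact h2.symm
  set c := (star U).mulVec v with hcdef
  have hcne : c ≠ 0 := by
    intro h
    apply hvne
    have h2 : U.mulVec c = v := by
      rw [hcdef, Matrix.mulVec_mulVec, hUU, Matrix.one_mulVec]
    rw [h, Matrix.mulVec_zero] at h2
    exact h2.symm
  have hMpd : ∀ μ : ℝ, 0 ≤ μ → (Q₀ + μ • Q₁).PosDef := fun μ hμ => comb_posDef hQ₀ hQ₁ hμ
  have hshift : ∀ t : ℝ, A + t • 1 = U * Matrix.diagonal (fun i => lam i + t) * star U :=
    spectral_shift hUU hUU' hAspec
  have hconjinv : ∀ μ : ℝ, 0 ≤ μ →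
      (A + μ • 1)⁻¹ = U * Matrix.diagonal (fun i => (lam i + μ)⁻¹) * star U := by
    intro μ hμ
    rw [hshift μ]
    exact conj_diag_inv hUU hUU' (fun i => by have := hlampos i; positivity)
  have hQeq : ∀ μ : ℝ, Q₀ + μ • Q₁ = R * (A + μ • 1) * R := by
    intro μ
    rw [hAdef, Matrix.mul_add, Matrix.add_mul]
    congr 1
    · calc Q₀ = (R * S) * Q₀ * (S * R) := by rw [hRS, hSR, one_mul, mul_one]
        _ = R * (S * Q₀ * S) * R := by simp only [mul_assoc]
    · rw [Matrix.mul_smul, Matrix.smul_mul, mul_one, hRR]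
  have hQinv : ∀ μ : ℝ, (Q₀ + μ • Q₁)⁻¹ = S * (A + μ • 1)⁻¹ * S := by
    intro μ
    rw [hQeq μ, Matrix.mul_inv_rev, Matrix.mul_inv_rev, ← hSdef, mul_assoc]
  set ψ : ℝ → ℝ := fun μ => ∑ i, (lam i + μ)⁻¹ * (c i)^2 with hψdef
  have hsand : ∀ (X : Matrix (Fin n) (Fin n) ℝ), d ⬝ᵥ (S * X * S).mulVec d = v ⬝ᵥ X.mulVec v := by
    intro X
    have h1 : (S * X * S).mulVec d = S.mulVec (X.mulVec (S.mulVec d)) := by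
      rw [Matrix.mulVec_mulVec, Matrix.mulVec_mulVec]
    rw [h1, dot_mulVec_symm hSpd.isHermitian, ← hvdef]
  have hdpsi : ∀ μ : ℝ, 0 ≤ μ → d ⬝ᵥ (Q₀ + μ • Q₁)⁻¹.mulVec d = ψ μ := by
    intro μ hμ
    rw [hQinv μ, hsand, hconjinv μ hμ, conj_diag_dot hUU hUU']
  set q := Q₁⁻¹.mulVec a₁ with hqdef
  have hQ₁Qinv : Q₁ * Q₁⁻¹ = 1 := Matrix.mul_nonsing_inv _ hQ₁.det_pos.ne'.isUnit
  have hdecomp : ∀ μ : ℝ, 0 ≤ μ →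
      (a₀ + μ • a₁) ⬝ᵥ (Q₀ + μ • Q₁)⁻¹.mulVec (a₀ + μ • a₁)
        = q ⬝ᵥ Q₀.mulVec q + μ * (q ⬝ᵥ Q₁.mulVec q) + 2 * (d ⬝ᵥ q) + ψ μ := by
    intro μ hμ
    have hpd := hMpd μ hμ
    have hdet := hpd.det_pos.ne'.isUnit
    have hMq : (Q₀ + μ • Q₁).mulVec q = (Q₀ * Q₁⁻¹).mulVec a₁ + μ • a₁ := by
      rw [Matrix.add_mulVec, Matrix.smul_mulVec]
      congr 1
      · rw [hqdef, Matrix.mulVec_mulVec]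
      · rw [hqdef, Matrix.mulVec_mulVec, hQ₁Qinv, Matrix.one_mulVec]
    have hcv : a₀ + μ • a₁ = (Q₀ + μ • Q₁).mulVec q + d := by
      rw [hMq, hddef]
      abel
    have hMinvH : ((Q₀ + μ • Q₁)⁻¹).IsHermitian := hpd.inv.isHermitian
    have hMinvM : (Q₀ + μ • Q₁)⁻¹.mulVec ((Q₀ + μ • Q₁).mulVec q) = q := by
      rw [Matrix.mulVec_mulVec, Matrix.nonsing_inv_mul _ hdet, Matrix.one_mulVec]
    rw [hcv, Matrix.mulVec_add, hMinvM, dotProduct_add, add_dotProduct,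
      add_dotProduct]
    have h3 : (Q₀ + μ • Q₁).mulVec q ⬝ᵥ (Q₀ + μ • Q₁)⁻¹.mulVec d = d ⬝ᵥ q := by
      rw [dot_mulVec_symm hMinvH, hMinvM, dotProduct_comm]
    have h4 : (Q₀ + μ • Q₁).mulVec q ⬝ᵥ q = q ⬝ᵥ Q₀.mulVec q + μ * (q ⬝ᵥ Q₁.mulVec q) := by
      rw [dotProduct_comm, Matrix.add_mulVec, dotProduct_add,
        Matrix.smul_mulVec, dotProduct_smul, smul_eq_mul]
    have h5 := hdpsi μ hμ
    rw [h3, h4, h5]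
    ring
  set bb0 := b₀ - 1/2 * (q ⬝ᵥ Q₀.mulVec q) - d ⬝ᵥ q with hbb0def
  set bb1 := b₁ - 1/2 * (q ⬝ᵥ Q₁.mulVec q) with hbb1def
  set hval : ℝ → ℝ := fun μ => bb0 + μ * bb1 - 1/2 * ψ μ with hvaldef
  have hval_eq : ∀ μ : ℝ, 0 ≤ μ →
      b₀ + μ * b₁ - 1/2 * ((a₀ + μ • a₁) ⬝ᵥ (Q₀ + μ • Q₁)⁻¹.mulVec (a₀ + μ • a₁)) = hval μ := by
    intro μ hμ
    rw [hdecomp μ hμ]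
    simp only [hvaldef, hbb0def, hbb1def]
    ring
  have hdual : ∀ μ : ℝ, 0 ≤ μ → dualQ Q₀ Q₁ a₀ a₁ b₀ b₁ μ = ((hval μ : ℝ) : EReal) := by
    intro μ hμ
    rw [dualQ]
    have hcomb : ∀ x, quadF Q₀ a₀ b₀ x + μ * quadF Q₁ a₁ b₁ x
        = quadF (Q₀ + μ • Q₁) (a₀ + μ • a₁) (b₀ + μ * b₁) x := quad_combine Q₀ Q₁ a₀ a₁ b₀ b₁ μ
    simp only [hcomb]
    rw [iInf_coe_eq (quad_lower (hMpd μ hμ) _ _) ⟨_, quad_min (hMpd μ hμ) _ _⟩]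
    exact_mod_cast hval_eq μ hμ
  set xopt : ℝ → (Fin n → ℝ) := fun μ => -((Q₀ + μ • Q₁)⁻¹.mulVec (a₀ + μ • a₁)) with hxoptdef
  have hatt : ∀ μ : ℝ, 0 ≤ μ →
      quadF Q₀ a₀ b₀ (xopt μ) + μ * quadF Q₁ a₁ b₁ (xopt μ) = hval μ := by
    intro μ hμ
    rw [quad_combine]
    simp only [hxoptdef]
    rw [quad_min (hMpd μ hμ)]
    exact hval_eq μ hμ
  have hub : ∀ μ : ℝ, 0 ≤ μ → hval μ ≤ quadF Q₀ a₀ b₀ x₀ + μ * quadF Q₁ a₁ b₁ x₀ := by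
    intro μ hμ
    rw [quad_combine, ← hval_eq μ hμ]
    exact quad_lower (hMpd μ hμ) _ _ x₀
  have hlow : ∀ x, hval 0 ≤ quadF Q₀ a₀ b₀ x := by
    intro x
    have h1 : hval 0 ≤ quadF Q₀ a₀ b₀ x + 0 * quadF Q₁ a₁ b₁ x := by
      rw [quad_combine, ← hval_eq 0 le_rfl]
      exact quad_lower (hMpd 0 le_rfl) _ _ x
    linarith
  have hcontg : Continuous (quadF Q₁ a₁ b₁) := by
    show Continuous fun x : Fin n → ℝ => 1/2 * (x ⬝ᵥ Q₁.mulVec x) + a₁ ⬝ᵥ x + b₁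
    have h1 : Continuous fun x : Fin n → ℝ => x ⬝ᵥ Q₁.mulVec x :=
      continuous_id.dotProduct (continuous_const.matrix_mulVec continuous_id)
    have h2 : Continuous fun x : Fin n → ℝ => a₁ ⬝ᵥ x :=
      continuous_const.dotProduct continuous_id
    exact ((continuous_const.mul h1).add h2).add continuous_const
  have hcontG : ∀ μ0 : ℝ, 0 ≤ μ0 → ContinuousAt (fun μ => quadF Q₁ a₁ b₁ (xopt μ)) μ0 := by
    intro μ0 hμ0
    have hM : Continuous fun μ : ℝ => Q₀ + μ • Q₁ :=
      continuous_const.add (continuous_id.smul continuous_const)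
    have hdet : ContinuousAt Ring.inverse ((Q₀ + μ0 • Q₁).det) := by
      rw [Ring.inverse_eq_inv']
      exact continuousAt_inv₀ (hMpd μ0 hμ0).det_pos.ne'
    have hinv : ContinuousAt (fun μ : ℝ => (Q₀ + μ • Q₁)⁻¹) μ0 := by
      exact ContinuousAt.comp (x := μ0) (f := fun μ : ℝ => Q₀ + μ • Q₁)
        (continuousAt_matrix_inv _ hdet) hM.continuousAt
    have hcv : Continuous fun μ : ℝ => a₀ + μ • a₁ :=
      continuous_const.add (continuous_id.smul continuous_const)
    have hmv : Continuous fun p : Matrix (Fin n) (Fin n) ℝ × (Fin n → ℝ) => p.1.mulVec p.2 :=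
      continuous_fst.matrix_mulVec continuous_snd
    have hx : ContinuousAt xopt μ0 :=
      ((hmv.continuousAt.comp (hinv.prodMk hcv.continuousAt)).neg : )
    exact hcontg.continuousAt.comp hx
  have hsup : ∃ μs : ℝ, 0 ≤ μs ∧ ℒ ≤ hval μs := by
    by_cases hG0 : quadF Q₁ a₁ b₁ (xopt 0) ≤ 0
    · refine ⟨0, le_rfl, ?_⟩
      have h := hℒ (xopt 0) hG0
      have h2 := hatt 0 le_rfl
      nlinarith [h, h2]
    · push_neg at hG0
      set K := quadF Q₀ a₀ b₀ x₀ - hval 0 with hKdef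
      have hK0 : 0 ≤ K := by
        have := hlow x₀
        rw [hKdef]
        linarith
      set ε := -quadF Q₁ a₁ b₁ x₀ with hεdef
      have hε : 0 < ε := by rw [hεdef]; linarith
      set μ1 := (K + 1) / ε with hμ1def
      have hμ1pos : 0 < μ1 := div_pos (by linarith) hε
      have hμ1ε : μ1 * ε = K + 1 := by
        rw [hμ1def]
        field_simp
      have hG1 : quadF Q₁ a₁ b₁ (xopt μ1) < 0 := by
        have h1 := hub μ1 hμ1pos.le
        have h2 := hatt μ1 hμ1pos.le
        have h3 := hlow (xopt μ1)
        have hgx : quadF Q₁ a₁ b₁ x₀ = -ε := by rw [hεdef]; ring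
        nlinarith [h1, h2, h3, hμ1pos, hμ1ε]
      have hcont : ContinuousOn (fun μ => quadF Q₁ a₁ b₁ (xopt μ)) (Set.Icc 0 μ1) :=
        fun x hx => (hcontG x hx.1).continuousWithinAt
      have h0mem : (0:ℝ) ∈ Set.Icc (quadF Q₁ a₁ b₁ (xopt μ1)) (quadF Q₁ a₁ b₁ (xopt 0)) :=
        ⟨hG1.le, hG0.le⟩
      obtain ⟨μs, hμsmem, hμs⟩ := intermediate_value_Icc' hμ1pos.le hcont h0mem
      refine ⟨μs, hμsmem.1, ?_⟩
      have hg0 : quadF Q₁ a₁ b₁ (xopt μs) = 0 := hμs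
      have hfeas := hℒ (xopt μs) hg0.le
      have h2 := hatt μs hμsmem.1
      rw [hg0] at h2
      nlinarith [hfeas, h2]
  have hcube : ∀ μ : ℝ, 0 ≤ μ → ((A + μ • 1)^3)⁻¹
      = U * Matrix.diagonal (fun i => ((lam i + μ)*(lam i + μ)*(lam i + μ))⁻¹) * star U := by
    intro μ hμ
    have h3 : (A + μ • 1)^3
        = U * Matrix.diagonal (fun i => (lam i + μ)*(lam i + μ)*(lam i + μ)) * star U := by
      rw [pow_succ, pow_succ, pow_one, hshift μ, conj_diag_mul hUU hUU', conj_diag_mul hUU hUU']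
    rw [h3]
    exact conj_diag_inv hUU hUU' (fun i => by have := hlampos i; positivity)
  have halpha : v ⬝ᵥ ((A + μb • 1)^3)⁻¹.mulVec v = ∑ i, ((lam i + μb)^3)⁻¹ * (c i)^2 := by
    rw [hcube μb hμb0, conj_diag_dot hUU hUU']
    refine Finset.sum_congr rfl fun i _ => ?_
    have hx : (lam i + μb)*(lam i + μb)*(lam i + μb) = (lam i + μb)^3 := by ring
    rw [hx]
  refine ⟨hμb0, ?_, ?_, ?_⟩
  · -- part 2
    intro μ hμ hopt
    obtain ⟨μs, hμs0, hμsL⟩ := hsup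
    have h1 : hval μs ≤ hval μ := by
      have h := hopt μs hμs0
      rw [hdual μs hμs0, hdual μ hμ] at h
      exact_mod_cast h
    have h2 := hub μ hμ
    refine ⟨hμ, ?_⟩
    rw [hμbdef, le_div_iff_of_neg hx₀]
    nlinarith [h1, h2, hμsL]
  · -- part 3
    rw [halpha]
    obtain ⟨i0, hi0⟩ := Function.ne_iff.1 hcne
    apply Finset.sum_pos'
    · intro i _
      have := hlampos i
      positivity
    · refine ⟨i0, Finset.mem_univ _, ?_⟩
      have h1 := hlampos i0
      have h2 : 0 < (c i0)^2 := pow_two_pos_of_ne_zero hi0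
      have h3 : 0 < ((lam i0 + μb)^3)⁻¹ := by positivity
      exact mul_pos h3 h2
  · -- part 4
    intro u hu hut hub' w hw hwt hwb t ht
    have hw0 : 0 ≤ t * u + (1 - t) * w := by nlinarith [ht.1, ht.2, hu.1, hw.1]
    have hwμ : t * u + (1 - t) * w ≤ μb := by nlinarith [ht.1, ht.2, hu.2, hw.2]
    rw [hdual u hu.1, hdual w hw.1, hdual _ hw0, EReal.toReal_coe, EReal.toReal_coe]
    apply EReal.coe_le_coe_iff.2
    rw [halpha]
    have hkey : (∑ i, ((lam i + μb)^3)⁻¹ * (c i)^2) * (t*(1-t)*(u-w)^2)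
        ≤ t * ψ u + (1-t) * ψ w - ψ (t*u+(1-t)*w) := by
      simp only [hψdef]
      rw [Finset.sum_mul, Finset.mul_sum, Finset.mul_sum, ← Finset.sum_add_distrib,
        ← Finset.sum_sub_distrib]
      apply Finset.sum_le_sum
      intro i _
      have hsk := scalar_key (hlampos i) hu.1 hu.2 hw.1 hw.2 ht.1 ht.2 (sq_nonneg (c i))
      nlinarith [hsk]
    simp only [hvaldef]
    nlinarith [hkey]
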